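/- Let k ≥ 3 be an integer. For real numbers p_1, …, p_k ∈ [0,1] with p_1 + ⋯ + p_k = 1, define M(p) to be the maximum of all the numbers p_i² (over i ∈ {1,…,k}) and 2·p_i·p_j (over pairs i ≠ j in {1,…,k}). Then M(p) ≥ 2/k² for every such p, and the choice p_i = 1/k for all i gives M(p) = 2/k²; hence the minimum of M(p) over the probability simplex equals 2/k². -/

import Mathlib

/-- `M(p)`: the maximum of all `p i ^ 2` (for `i`) and `2 * p i * p j` (for `i ≠ j`),
encoded as a `Finset.sup'` over all ordered pairs `(i, j)`, where the diagonal entries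
give `p i ^ 2` and the off-diagonal ones give `2 * p i * p j`. -/
noncomputable def simplexMax {k : ℕ} (hk : 0 < k) (p : Fin k → ℝ) : ℝ :=
  have : Nonempty (Fin k) := Fin.pos_iff_nonempty.mp hk
  Finset.univ.sup' Finset.univ_nonempty
    (fun ij : Fin k × Fin k => if ij.1 = ij.2 then p ij.1 ^ 2 else 2 * p ij.1 * p ij.2)

lemma simplexMax_lower (k : ℕ) (hk : 3 ≤ k) (p : Fin k → ℝ)
    (hp : ∀ i, p i ∈ Set.Icc (0 : ℝ) 1) (hs : (∑ i, p i) = 1) :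
    2 / (k : ℝ) ^ 2 ≤ simplexMax (lt_of_lt_of_le (by norm_num) hk) p := by
  have hk3 : (3:ℝ) ≤ k := by exact_mod_cast hk
  have hkpos : (0:ℝ) < k := by linarith
  have hne : Nonempty (Fin k) := Fin.pos_iff_nonempty.mp (lt_of_lt_of_le (by norm_num) hk)
  obtain ⟨a, -, ha⟩ := Finset.exists_max_image Finset.univ p Finset.univ_nonempty
  have herase : (Finset.univ.erase a).Nonempty := by
    rw [← Finset.card_pos, Finset.card_erase_of_mem (Finset.mem_univ a)]
    simp only [Finset.card_univ, Fintype.card_fin]; omega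
  obtain ⟨b, hb_mem, hb⟩ := Finset.exists_max_image (Finset.univ.erase a) p herase
  have hab : b ≠ a := Finset.ne_of_mem_erase hb_mem
  have hpa := hp a
  have hpb := hp b
  have h1 : 1 ≤ (k:ℝ) * p a := by
    calc (1:ℝ) = ∑ i, p i := hs.symm
    _ ≤ ∑ _i : Fin k, p a := Finset.sum_le_sum fun i _ => ha i (Finset.mem_univ i)
    _ = k * p a := by simp [Finset.sum_const, mul_comm]
  have h2 : 1 ≤ p a + ((k:ℝ) - 1) * p b := by
    have hle : ∑ i ∈ Finset.univ.erase a, p i ≤ (Finset.univ.erase a).card • p b :=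
      Finset.sum_le_card_nsmul _ _ _ (fun i hi => hb i hi)
    have hcard : (Finset.univ.erase a).card = k - 1 := by
      rw [Finset.card_erase_of_mem (Finset.mem_univ a)]
      simp only [Finset.card_univ, Fintype.card_fin]
    rw [hcard, nsmul_eq_mul] at hle
    have hsum : p a + ∑ i ∈ Finset.univ.erase a, p i = 1 := by
      rw [← hs, Finset.add_sum_erase _ _ (Finset.mem_univ a)]
    have hcast : ((k - 1 : ℕ) : ℝ) = (k : ℝ) - 1 := by
      rw [Nat.cast_sub (by omega)]; simp
    rw [hcast] at hle
    linarith
  have hM2 : p a ^ 2 ≤ simplexMax (lt_of_lt_of_le (by norm_num) hk) p := by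
    have := Finset.le_sup' (f := fun ij : Fin k × Fin k =>
      if ij.1 = ij.2 then p ij.1 ^ 2 else 2 * p ij.1 * p ij.2)
      (b := (a, a)) (Finset.mem_univ _)
    simpa [simplexMax, -Finset.le_sup'_iff] using this
  have hM3 : 2 * p a * p b ≤ simplexMax (lt_of_lt_of_le (by norm_num) hk) p := by
    have := Finset.le_sup' (f := fun ij : Fin k × Fin k =>
      if ij.1 = ij.2 then p ij.1 ^ 2 else 2 * p ij.1 * p ij.2)
      (b := (a, b)) (Finset.mem_univ _)
    simpa [simplexMax, (Ne.symm hab : a ≠ b), -Finset.le_sup'_iff] using this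
  by_cases hcase : 2 / (k:ℝ)^2 ≤ p a ^ 2
  · linarith
  · push_neg at hcase
    have hcase' : p a ^ 2 * (k:ℝ)^2 < 2 := (lt_div_iff₀ (by positivity)).mp hcase
    have hpaub : (k:ℝ) * p a ≤ (k:ℝ) - 1 := by
      nlinarith [hpa.1, hk3, hcase']
    have key : 2 / (k:ℝ)^2 ≤ 2 * p a * p b := by
      rw [div_le_iff₀ (by positivity)]
      have hu : 0 ≤ ((k:ℝ) * p a - 1) * (((k:ℝ) - 1) - (k:ℝ) * p a) := by
        apply mul_nonneg <;> linarith
      have hv : 0 ≤ p a * (p a + ((k:ℝ) - 1) * p b - 1) :=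
        mul_nonneg hpa.1 (by linarith)
      nlinarith [hpb.1, hpa.1, mul_nonneg hpa.1 hpb.1]
    linarith

lemma simplexMax_uniform (k : ℕ) (hk : 3 ≤ k) :
    simplexMax (lt_of_lt_of_le (by norm_num) hk) (fun _ => 1 / (k : ℝ)) = 2 / (k : ℝ) ^ 2 := by
  have hkpos : (0:ℝ) < k := by exact_mod_cast (by omega : 0 < k)
  have hne : Nonempty (Fin k) := Fin.pos_iff_nonempty.mp (lt_of_lt_of_le (by norm_num) hk)
  unfold simplexMax
  apply le_antisymm
  · apply Finset.sup'_le
    intro ij _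
    dsimp only
    split
    · rw [div_pow]
      rw [div_le_div_iff₀ (by positivity) (by positivity)]
      nlinarith
    · exact le_of_eq (by field_simp)
  · have h01 : (⟨0, by omega⟩ : Fin k) ≠ ⟨1, by omega⟩ := by
      simp [Fin.ext_iff]
    calc 2 / (k:ℝ)^2 = 2 * (1/(k:ℝ)) * (1/(k:ℝ)) := by field_simp
    _ ≤ _ := by
        have := Finset.le_sup' (f := fun ij : Fin k × Fin k =>
          if ij.1 = ij.2 then (fun _ => 1/(k:ℝ)) ij.1 ^ 2 else 2 * (fun _ => 1/(k:ℝ)) ij.1 * (fun _ => 1/(k:ℝ)) ij.2)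
          (b := ((⟨0, by omega⟩ : Fin k), (⟨1, by omega⟩ : Fin k))) (Finset.mem_univ _)
        simpa [h01, -Finset.le_sup'_iff] using this

/-- For `k ≥ 3`: every probability vector `p` on `Fin k` (entries in `[0,1]`
summing to `1`) satisfies `M(p) ≥ 2/k²`; the uniform vector `p i = 1/k` attains
`M(p) = 2/k²`; hence the minimum of `M(p)` over the probability simplex equals `2/k²`. -/
theorem simplexMax_min_eq_two_div_sq (k : ℕ) (hk : 3 ≤ k) :
    (∀ p : Fin k → ℝ, (∀ i, p i ∈ Set.Icc (0 : ℝ) 1) → (∑ i, p i) = 1 →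
        2 / (k : ℝ) ^ 2 ≤ simplexMax (by omega) p) ∧
    simplexMax (show 0 < k by omega) (fun _ => 1 / (k : ℝ)) = 2 / (k : ℝ) ^ 2 ∧
    IsLeast {x : ℝ | ∃ p : Fin k → ℝ, (∀ i, p i ∈ Set.Icc (0 : ℝ) 1) ∧
        (∑ i, p i) = 1 ∧ simplexMax (show 0 < k by omega) p = x} (2 / (k : ℝ) ^ 2) := by
  have hk3 : (3:ℝ) ≤ k := by exact_mod_cast hk
  have hkpos : (0:ℝ) < k := by linarith
  have hicc : ∀ i : Fin k, (fun _ => 1/(k:ℝ)) i ∈ Set.Icc (0:ℝ) 1 := by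
    intro i
    constructor
    · positivity
    · rw [div_le_one hkpos]; linarith
  have hsum : (∑ _i : Fin k, 1/(k:ℝ)) = 1 := by
    rw [Finset.sum_const]
    simp only [Finset.card_univ, Fintype.card_fin, nsmul_eq_mul]
    field_simp
  refine ⟨fun p hp hs => simplexMax_lower k hk p hp hs, simplexMax_uniform k hk, ?_, ?_⟩
  · exact ⟨fun _ => 1/(k:ℝ), hicc, hsum, simplexMax_uniform k hk⟩
  · rintro x ⟨p, hp, hs, rfl⟩
    exact simplexMax_lower k hk p hp hs
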